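/- Let f ∈ K and w := λ_x(f). If ε > 0 and g ∈ C(Ω) satisfies ‖λ_x(g) − w‖ ≤ ε and dist(g, K)_{C(Ω)} ≤ ε (i.e. there is h ∈ K with ‖g − h‖_{C(Ω)} ≤ ε), then ‖j(f) − j(g)‖_X ≤ C_X ε + 2 R(K(w, 2ε))_X. -/

import Mathlib

/-- Chebyshev radius in `X` of the image under `J` of a set `S`:
`R(S)_X = inf_{z ∈ X} sup_{f ∈ S} ‖J f - z‖`. -/
noncomputable def chebRadMap {A X : Type*} [NormedAddCommGroup X]
    (J : A → X) (S : Set A) : ℝ :=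
  ⨅ z : X, ⨆ f : S, ‖J (f : A) - z‖

/-- Weighted euclidean norm on `ℝ^m`: `‖v‖ = ( m⁻¹ ∑ v_j² )^{1/2}`. -/
noncomputable def wNorm {m : ℕ} (v : Fin m → ℝ) : ℝ :=
  Real.sqrt ((∑ j, v j ^ 2) / m)

lemma wNorm_eq {m : ℕ} (v : Fin m → ℝ) :
    wNorm v = Real.sqrt (∑ j, v j ^ 2) / Real.sqrt m := by
  rw [wNorm, Real.sqrt_div (by positivity)]

lemma wNorm_add_le {m : ℕ} (v w : Fin m → ℝ) :
    wNorm (v + w) ≤ wNorm v + wNorm w := by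
  have hE : ∀ u : Fin m → ℝ,
      Real.sqrt (∑ j, u j ^ 2) = ‖(WithLp.equiv 2 (Fin m → ℝ)).symm u‖ := by
    intro u
    rw [EuclideanSpace.norm_eq]
    simp [Real.norm_eq_abs, sq_abs]
  rw [wNorm_eq, wNorm_eq, wNorm_eq, hE, hE, hE, ← add_div]
  apply div_le_div_of_nonneg_right ?_ (Real.sqrt_nonneg _)
  calc ‖(WithLp.equiv 2 (Fin m → ℝ)).symm (v + w)‖
      = ‖(WithLp.equiv 2 (Fin m → ℝ)).symm v + (WithLp.equiv 2 (Fin m → ℝ)).symm w‖ := by simp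
    _ ≤ _ := norm_add_le _ _

lemma wNorm_le {m : ℕ} (hm : 0 < m) {v : Fin m → ℝ} {c : ℝ} (hc : 0 ≤ c)
    (h : ∀ j, |v j| ≤ c) : wNorm v ≤ c := by
  rw [wNorm, show c = Real.sqrt (c ^ 2) from (Real.sqrt_sq hc).symm]
  apply Real.sqrt_le_sqrt
  rw [div_le_iff₀ (by exact_mod_cast hm)]
  calc ∑ j, v j ^ 2 ≤ ∑ _j : Fin m, c ^ 2 := by
        apply Finset.sum_le_sum
        intro j _
        calc v j ^ 2 = |v j| ^ 2 := (sq_abs _).symm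
          _ ≤ c ^ 2 := pow_le_pow_left₀ (abs_nonneg _) (h j) 2
    _ = c ^ 2 * m := by simp [mul_comm]

/-- Point-value data: if `g ∈ C(Ω)` fits the data `w = λ_x(f)` to accuracy `ε` and
`dist(g,K)_{C(Ω)} ≤ ε`, then `‖j(f) − j(g)‖_X ≤ C_X ε + 2 R(K(w,2ε))_X`. -/
theorem stmt_6
    {d : ℕ} {Ω : Set (EuclideanSpace ℝ (Fin d))} [CompactSpace Ω]
    {X : Type*} [NormedAddCommGroup X] [NormedSpace ℝ X] [CompleteSpace X]
    {m : ℕ} (hm : 0 < m) (x : Fin m → Ω)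
    (J : C(Ω, ℝ) →ₗ[ℝ] X) (hJinj : Function.Injective J)
    (CX : ℝ) (hJ : ∀ g : C(Ω, ℝ), ‖J g‖ ≤ CX * ‖g‖)
    (K : Set C(Ω, ℝ)) (hK : IsCompact K)
    (f : C(Ω, ℝ)) (hf : f ∈ K)
    (ε : ℝ) (hε : 0 < ε) (g : C(Ω, ℝ))
    (hg1 : wNorm (fun j => g (x j) - f (x j)) ≤ ε)
    (hg2 : ∃ h ∈ K, ‖g - h‖ ≤ ε) :
    ‖J f - J g‖ ≤ CX * ε +
      2 * chebRadMap (fun u => J u)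
        {u ∈ K | wNorm (fun j => u (x j) - f (x j)) ≤ 2 * ε} := by
  obtain ⟨h, hhK, hgh⟩ := hg2
  haveI hΩ : Nonempty Ω := ⟨x ⟨0, hm⟩⟩
  set S : Set C(Ω, ℝ) := {u ∈ K | wNorm (fun j => u (x j) - f (x j)) ≤ 2 * ε} with hS
  -- CX is nonnegative
  have hCX : 0 ≤ CX := by
    have h1 : ‖(1 : C(Ω, ℝ))‖ = 1 := norm_one
    have h2 := hJ 1
    nlinarith [norm_nonneg (J 1)]
  -- f ∈ S
  have hfS : f ∈ S := by
    constructor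
    · exact hf
    · have : (fun j => f (x j) - f (x j)) = fun _ => (0 : ℝ) := by funext j; ring
      simp only [this]
      have : wNorm (fun _ : Fin m => (0 : ℝ)) = 0 := by simp [wNorm]
      rw [this]; positivity
  -- h ∈ S
  have hhS : h ∈ S := by
    refine ⟨hhK, ?_⟩
    have hsplit : (fun j => h (x j) - f (x j)) =
        (fun j => h (x j) - g (x j)) + fun j => g (x j) - f (x j) := by
      funext j; simp only [Pi.add_apply]; ring
    rw [hsplit]
    have h1 : wNorm (fun j => h (x j) - g (x j)) ≤ ε := by
      apply wNorm_le hm (le_of_lt hε)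
      intro j
      have := (g - h).norm_coe_le_norm (x j)
      have habs : |h (x j) - g (x j)| = ‖(g - h) (x j)‖ := by
        simp [Real.norm_eq_abs, abs_sub_comm]
      rw [habs]
      exact le_trans this hgh
    have h2 := wNorm_add_le (fun j => h (x j) - g (x j)) (fun j => g (x j) - f (x j))
    linarith
  -- boundedness of K
  obtain ⟨M, hM⟩ := isBounded_iff_forall_norm_le.mp hK.isBounded
  have hbdd : ∀ z : X, BddAbove (Set.range fun u : S => ‖J (u : C(Ω, ℝ)) - z‖) := by
    intro z
    refine ⟨CX * M + ‖z‖, ?_⟩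
    rintro r ⟨u, rfl⟩
    calc ‖J (u : C(Ω, ℝ)) - z‖ ≤ ‖J (u : C(Ω, ℝ))‖ + ‖z‖ := norm_sub_le _ _
      _ ≤ CX * ‖(u : C(Ω, ℝ))‖ + ‖z‖ := by linarith [hJ (u : C(Ω, ℝ))]
      _ ≤ CX * M + ‖z‖ := by
          have := hM _ u.2.1
          nlinarith
  -- key bound
  have hkey : ‖J f - J h‖ ≤ 2 * chebRadMap (fun u => J u) S := by
    have hhalf : ‖J f - J h‖ / 2 ≤ chebRadMap (fun u => J u) S := by
      apply le_ciInf
      intro z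
      have h1 : ‖J f - z‖ ≤ ⨆ u : S, ‖J (u : C(Ω, ℝ)) - z‖ :=
        le_ciSup (hbdd z) ⟨f, hfS⟩
      have h2 : ‖J h - z‖ ≤ ⨆ u : S, ‖J (u : C(Ω, ℝ)) - z‖ :=
        le_ciSup (hbdd z) ⟨h, hhS⟩
      have h3 : ‖J f - J h‖ ≤ ‖J f - z‖ + ‖J h - z‖ := by
        calc ‖J f - J h‖ ≤ ‖J f - z‖ + ‖z - J h‖ := norm_sub_le_norm_sub_add_norm_sub _ _ _
          _ = ‖J f - z‖ + ‖J h - z‖ := by rw [norm_sub_rev z]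
      linarith
    linarith
  -- finish
  have hlast : ‖J h - J g‖ ≤ CX * ε := by
    have : J h - J g = J (h - g) := (map_sub J h g).symm
    rw [this]
    calc ‖J (h - g)‖ ≤ CX * ‖h - g‖ := hJ _
      _ ≤ CX * ε := by
          have : ‖h - g‖ = ‖g - h‖ := norm_sub_rev _ _
          nlinarith
  calc ‖J f - J g‖ ≤ ‖J f - J h‖ + ‖J h - J g‖ := norm_sub_le_norm_sub_add_norm_sub _ _ _
    _ ≤ CX * ε + 2 * chebRadMap (fun u => J u) S := by linarith
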